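/- Gauge invariance of the error curve: let Z_Λ(t) = exp(−i Λ(t) σ_z/2) for a C¹ function Λ, and define Ũ(t) = Z_{Λ(t)} U₀(t) Z_{−Λ(0)}. Then Ũ is generated by a Hamiltonian of the same form with Φ̃ = Φ + Λ and Δ̃ = Δ + Λ', and the new error curve r̃(t) (defined via Ũ in place of U₀) is obtained from r(t) by a fixed rotation: r̃(t) = R r(t) for all t, where R ∈ SO(3) is the rotation about the z axis by angle Λ(0). -/

import Mathlib

open intervalIntegral Matrix Complex

/-- Pauli matrices. -/
def σx : Matrix (Fin 2) (Fin 2) ℂ := !![0, 1; 1, 0]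
def σy : Matrix (Fin 2) (Fin 2) ℂ := !![0, -Complex.I; Complex.I, 0]
def σz : Matrix (Fin 2) (Fin 2) ℂ := !![1, 0; 0, -1]

/-- The control Hamiltonian
`H₀(t) = (Ω/2)(cosΦ σx + sinΦ σy) + (Δ/2) σz`. -/
noncomputable def H0 (Ω Φ Δ : ℝ → ℝ) (t : ℝ) : Matrix (Fin 2) (Fin 2) ℂ :=
  (Ω t / 2) • (Real.cos (Φ t) • σx + Real.sin (Φ t) • σy) + (Δ t / 2) • σz

/-- `Z_Λ = exp(−i Λ σz/2)`, written explicitly as a diagonal matrix. -/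
noncomputable def Zgate (φ : ℝ) : Matrix (Fin 2) (Fin 2) ℂ :=
  !![Complex.exp (-Complex.I * φ / 2), 0; 0, Complex.exp (Complex.I * φ / 2)]

lemma expm (x : ℝ) : Complex.exp (-(Complex.I * x) / 2) * Complex.exp (-(Complex.I * x) / 2)
    = Complex.cos x - Complex.sin x * Complex.I := by
  rw [← Complex.exp_add,
    show -(Complex.I * x) / 2 + -(Complex.I * x) / 2 = -(x:ℂ) * Complex.I by ring,
    Complex.exp_mul_I]
  simp [Complex.cos_neg, Complex.sin_neg]; ring

lemma expp (x : ℝ) : Complex.exp (Complex.I * x / 2) * Complex.exp (Complex.I * x / 2)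
    = Complex.cos x + Complex.sin x * Complex.I := by
  rw [← Complex.exp_add,
    show Complex.I * x / 2 + Complex.I * x / 2 = (x:ℂ) * Complex.I by ring,
    Complex.exp_mul_I]

lemma zz (φ : ℝ) : Complex.exp (-(Complex.I * φ) / 2) * Complex.exp (Complex.I * φ / 2) = 1 := by
  rw [← Complex.exp_add]; ring_nf; exact Complex.exp_zero

lemma cexp_conj_m (φ : ℝ) : (starRingEnd ℂ) (Complex.exp (-(Complex.I * φ) / 2))
    = Complex.exp (Complex.I * φ / 2) := by
  rw [← Complex.exp_conj]; congr 1
  simp [map_div₀, Complex.conj_I, Complex.conj_ofReal, map_ofNat]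

lemma cexp_conj_p (φ : ℝ) : (starRingEnd ℂ) (Complex.exp (Complex.I * φ / 2))
    = Complex.exp (-(Complex.I * φ) / 2) := by
  rw [← Complex.exp_conj]; congr 1
  simp [map_div₀, Complex.conj_I, Complex.conj_ofReal, map_ofNat]

lemma pauli_inj (a b c a' b' c' : ℝ)
    (h : a • σx + b • σy + c • σz = a' • σx + b' • σy + c' • σz) :
    a = a' ∧ b = b' ∧ c = c' := by
  have h00 := congrFun (congrFun h 0) 0
  have h01 := congrFun (congrFun h 0) 1
  simp [σx, σy, σz] at h00 h01
  refine ⟨?_, ?_, by exact_mod_cast h00⟩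
  · have := congrArg Complex.re h01
    simpa using this
  · have := congrArg Complex.im h01
    simpa using this

lemma zconj_z (φ : ℝ) : (Zgate φ)ᴴ * σz * Zgate φ = σz := by
  have e3 := zz φ
  ext i j
  fin_cases i <;> fin_cases j <;>
    simp [Zgate, σz, Matrix.mul_apply, Fin.sum_univ_two, conjTranspose_apply,
      neg_mul, cexp_conj_m, cexp_conj_p]
  · linear_combination e3
  · linear_combination e3

lemma zconj (φ a b c : ℝ) :
    (Zgate φ)ᴴ * ((a:ℝ) • σx + b • σy + c • σz) * Zgate φ =
      (a * Real.cos φ + b * Real.sin φ) • σx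
        + (b * Real.cos φ - a * Real.sin φ) • σy + c • σz := by
  have e1 := expm φ; have e2 := expp φ; have e3 := zz φ
  ext i j
  fin_cases i <;> fin_cases j <;>
    simp [Zgate, σx, σy, σz, Matrix.mul_apply, Fin.sum_univ_two, conjTranspose_apply,
      neg_mul, cexp_conj_m, cexp_conj_p, Complex.ofReal_cos, Complex.ofReal_sin]
  · linear_combination (c:ℂ) * e3
  · linear_combination ((a:ℂ) - b * Complex.I) * e2 - (b:ℂ) * Complex.sin φ * Complex.I_sq
  · linear_combination ((a:ℂ) + b * Complex.I) * e1 - (b:ℂ) * Complex.sin φ * Complex.I_sq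
  · linear_combination (c:ℂ) * e3

lemma conj_sandwich (φ ψ : ℝ) (A : Matrix (Fin 2) (Fin 2) ℂ) :
    (Zgate φ * A * Zgate ψ)ᴴ * σz * (Zgate φ * A * Zgate ψ)
      = (Zgate ψ)ᴴ * (Aᴴ * σz * A) * Zgate ψ := by
  have h1 := zconj_z φ
  calc (Zgate φ * A * Zgate ψ)ᴴ * σz * (Zgate φ * A * Zgate ψ)
      = (Zgate ψ)ᴴ * (Aᴴ * ((Zgate φ)ᴴ * σz * Zgate φ) * A) * Zgate ψ := by
        simp only [conjTranspose_mul, Matrix.mul_assoc]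
    _ = (Zgate ψ)ᴴ * (Aᴴ * σz * A) * Zgate ψ := by rw [h1]

lemma triple (A : Matrix (Fin 2) (Fin 2) ℂ) (φ ψ : ℝ) (i j : Fin 2) :
    (Zgate φ * A * Zgate ψ) i j = Zgate φ i i * A i j * Zgate ψ j j := by
  fin_cases i <;> fin_cases j <;>
    simp [Zgate, Matrix.mul_apply, Matrix.vecMul, dotProduct, Fin.sum_univ_two]

lemma intcomp (i : Fin 3) (f : ℝ → Fin 3 → ℝ) (hf : Continuous f) (a b : ℝ) :
    (∫ t in a..b, f t) i = ∫ t in a..b, f t i := by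
  have := (ContinuousLinearMap.proj (R := ℝ) (φ := fun _ : Fin 3 => ℝ) i).intervalIntegral_comp_comm
    (hf.intervalIntegrable (μ := MeasureTheory.volume) a b)
  simpa using this.symm


lemma cossin_m (θ : ℂ) : Complex.cos θ - Complex.sin θ * Complex.I
    = Complex.exp (-θ * Complex.I) := by
  rw [Complex.exp_mul_I, Complex.cos_neg, Complex.sin_neg]; ring

lemma cossin_p (θ : ℂ) : Complex.cos θ + Complex.sin θ * Complex.I
    = Complex.exp (θ * Complex.I) := (Complex.exp_mul_I θ).symm

lemma eshift_m (x y : ℝ) :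
    (Complex.cos ((x:ℂ) + y) - Complex.sin ((x:ℂ) + y) * Complex.I)
        * Complex.exp (Complex.I * y / 2)
      = (Complex.cos (x:ℂ) - Complex.sin (x:ℂ) * Complex.I)
        * Complex.exp (-(Complex.I * (y:ℂ) / 2)) := by
  rw [cossin_m, cossin_m, ← Complex.exp_add, ← Complex.exp_add]
  congr 1
  ring

lemma eshift_p (x y : ℝ) :
    (Complex.cos ((x:ℂ) + y) + Complex.sin ((x:ℂ) + y) * Complex.I)
        * Complex.exp (-(Complex.I * (y:ℂ) / 2))
      = (Complex.cos (x:ℂ) + Complex.sin (x:ℂ) * Complex.I)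
        * Complex.exp (Complex.I * y / 2) := by
  rw [cossin_p, cossin_p, ← Complex.exp_add, ← Complex.exp_add]
  congr 1
  ring


/-- gauge invariance of the error curve. With
`Ũ(t) = Z_{Λ(t)} U₀(t) Z_{−Λ(0)}`, the evolution `Ũ` is generated by a
Hamiltonian of the same form with `Φ̃ = Φ + Λ`, `Δ̃ = Δ + Λ'`, and the new
error curve `r̃` equals the old one rotated about the z axis by the angle
`Λ(0)`. -/
theorem stmt_16 (Ω Φ Δ Λ : ℝ → ℝ) (hΩ : Continuous Ω) (hΦ : Continuous Φ)
    (hΔ : Continuous Δ) (hΛ : ContDiff ℝ 1 Λ)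
    (U0 : ℝ → Matrix (Fin 2) (Fin 2) ℂ) (hU00 : U0 0 = 1)
    (hU0unitary : ∀ t : ℝ, (U0 t)ᴴ * U0 t = 1)
    (hU0ode : ∀ (i j : Fin 2) (t : ℝ), HasDerivAt (fun t' => U0 t' i j)
      (((-Complex.I) • (H0 Ω Φ Δ t * U0 t)) i j) t)
    (Ut : ℝ → Matrix (Fin 2) (Fin 2) ℂ)
    (hUt : ∀ t : ℝ, Ut t = Zgate (Λ t) * U0 t * Zgate (-(Λ 0)))
    (T Tt : ℝ → (Fin 3 → ℝ)) (hTcont : Continuous T) (hTtcont : Continuous Tt)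
    (hT : ∀ t : ℝ, (T t 0) • σx + (T t 1) • σy + (T t 2) • σz =
      (U0 t)ᴴ * σz * U0 t)
    (hTt : ∀ t : ℝ, (Tt t 0) • σx + (Tt t 1) • σy + (Tt t 2) • σz =
      (Ut t)ᴴ * σz * Ut t)
    (r rt : ℝ → (Fin 3 → ℝ))
    (hrdef : ∀ t : ℝ, r t = ∫ t' in (0:ℝ)..t, T t')
    (hrtdef : ∀ t : ℝ, rt t = ∫ t' in (0:ℝ)..t, Tt t') :
    (∀ (i j : Fin 2) (t : ℝ), HasDerivAt (fun t' => Ut t' i j)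
      (((-Complex.I) • (H0 Ω (fun u => Φ u + Λ u)
          (fun u => Δ u + deriv Λ u) t * Ut t)) i j) t) ∧
    (∀ t : ℝ, rt t =
      ![Real.cos (Λ 0) * r t 0 - Real.sin (Λ 0) * r t 1,
        Real.sin (Λ 0) * r t 0 + Real.cos (Λ 0) * r t 1,
        r t 2]) := by
  constructor
  · intro i j t
    have hld : HasDerivAt Λ (deriv Λ t) t := ((hΛ.differentiable one_ne_zero) t).hasDerivAt
    have hldC : HasDerivAt (fun t' => ((Λ t' : ℝ) : ℂ)) ((deriv Λ t : ℝ) : ℂ) t :=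
      hld.ofReal_comp
    have hdm : HasDerivAt (fun t' => Complex.exp (-Complex.I * (Λ t') / 2))
        (Complex.exp (-Complex.I * (Λ t) / 2) * (-Complex.I * (deriv Λ t) / 2)) t := by
      have h1 : HasDerivAt (fun t' => -Complex.I * ((Λ t' : ℝ) : ℂ) / 2)
          (-Complex.I * (deriv Λ t) / 2) t := (hldC.const_mul (-Complex.I)).div_const 2
      exact h1.cexp
    have hdp : HasDerivAt (fun t' => Complex.exp (Complex.I * (Λ t') / 2))
        (Complex.exp (Complex.I * (Λ t) / 2) * (Complex.I * (deriv Λ t) / 2)) t := by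
      have h1 : HasDerivAt (fun t' => Complex.I * ((Λ t' : ℝ) : ℂ) / 2)
          (Complex.I * (deriv Λ t) / 2) t := (hldC.const_mul Complex.I).div_const 2
      exact h1.cexp
    fin_cases i <;> fin_cases j <;>
      simp only [Fin.zero_eta, Fin.mk_one, Fin.isValue]
    · have hfun : (fun t' => Ut t' 0 0)
          = fun t' => Complex.exp (-Complex.I * (Λ t') / 2) * U0 t' 0 0 * Zgate (-(Λ 0)) 0 0 := by
        funext u; rw [hUt u, triple]; simp [Zgate]
      rw [hfun]
      have hD := (hdm.mul (hU0ode 0 0 t)).mul_const (Zgate (-(Λ 0)) 0 0)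
      convert hD using 1
      · rfl
      · rfl
      rw [hUt t]
      simp only [Matrix.smul_apply, Matrix.mul_apply, Fin.sum_univ_two, triple]
      simp [H0, σx, σy, σz, Zgate, Matrix.mul_apply, Fin.sum_univ_two,
        Complex.real_smul, Complex.ofReal_add, Complex.ofReal_cos, Complex.ofReal_sin,
        Complex.ofReal_neg, mul_neg, neg_mul, neg_neg, neg_div]
      linear_combination (-Complex.I) * ((Ω t : ℂ)/2) * (U0 t 1 0)
        * Complex.exp (Complex.I * ((Λ 0 : ℝ) : ℂ) / 2) * eshift_m (Φ t) (Λ t)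
    · have hfun : (fun t' => Ut t' 0 1)
          = fun t' => Complex.exp (-Complex.I * (Λ t') / 2) * U0 t' 0 1 * Zgate (-(Λ 0)) 1 1 := by
        funext u; rw [hUt u, triple]; simp [Zgate]
      rw [hfun]
      have hD := (hdm.mul (hU0ode 0 1 t)).mul_const (Zgate (-(Λ 0)) 1 1)
      convert hD using 1
      · rfl
      · rfl
      rw [hUt t]
      simp only [Matrix.smul_apply, Matrix.mul_apply, Fin.sum_univ_two, triple]
      simp [H0, σx, σy, σz, Zgate, Matrix.mul_apply, Fin.sum_univ_two,
        Complex.real_smul, Complex.ofReal_add, Complex.ofReal_cos, Complex.ofReal_sin,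
        Complex.ofReal_neg, mul_neg, neg_mul, neg_neg, neg_div]
      linear_combination (-Complex.I) * ((Ω t : ℂ)/2) * (U0 t 1 1)
        * Complex.exp (-(Complex.I * ((Λ 0 : ℝ) : ℂ) / 2)) * eshift_m (Φ t) (Λ t)
    · have hfun : (fun t' => Ut t' 1 0)
          = fun t' => Complex.exp (Complex.I * (Λ t') / 2) * U0 t' 1 0 * Zgate (-(Λ 0)) 0 0 := by
        funext u; rw [hUt u, triple]; simp [Zgate]
      rw [hfun]
      have hD := (hdp.mul (hU0ode 1 0 t)).mul_const (Zgate (-(Λ 0)) 0 0)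
      convert hD using 1
      · rfl
      · rfl
      rw [hUt t]
      simp only [Matrix.smul_apply, Matrix.mul_apply, Fin.sum_univ_two, triple]
      simp [H0, σx, σy, σz, Zgate, Matrix.mul_apply, Fin.sum_univ_two,
        Complex.real_smul, Complex.ofReal_add, Complex.ofReal_cos, Complex.ofReal_sin,
        Complex.ofReal_neg, mul_neg, neg_mul, neg_neg, neg_div]
      linear_combination (-Complex.I) * ((Ω t : ℂ)/2) * (U0 t 0 0)
        * Complex.exp (Complex.I * ((Λ 0 : ℝ) : ℂ) / 2) * eshift_p (Φ t) (Λ t)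
    · have hfun : (fun t' => Ut t' 1 1)
          = fun t' => Complex.exp (Complex.I * (Λ t') / 2) * U0 t' 1 1 * Zgate (-(Λ 0)) 1 1 := by
        funext u; rw [hUt u, triple]; simp [Zgate]
      rw [hfun]
      have hD := (hdp.mul (hU0ode 1 1 t)).mul_const (Zgate (-(Λ 0)) 1 1)
      convert hD using 1
      · rfl
      · rfl
      rw [hUt t]
      simp only [Matrix.smul_apply, Matrix.mul_apply, Fin.sum_univ_two, triple]
      simp [H0, σx, σy, σz, Zgate, Matrix.mul_apply, Fin.sum_univ_two,
        Complex.real_smul, Complex.ofReal_add, Complex.ofReal_cos, Complex.ofReal_sin,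
        Complex.ofReal_neg, mul_neg, neg_mul, neg_neg, neg_div]
      linear_combination (-Complex.I) * ((Ω t : ℂ)/2) * (U0 t 0 1)
        * Complex.exp (-(Complex.I * ((Λ 0 : ℝ) : ℂ) / 2)) * eshift_p (Φ t) (Λ t)
  · -- Part 2
    have hTteq : ∀ u : ℝ,
        Tt u 0 = Real.cos (Λ 0) * T u 0 - Real.sin (Λ 0) * T u 1 ∧
        Tt u 1 = Real.sin (Λ 0) * T u 0 + Real.cos (Λ 0) * T u 1 ∧
        Tt u 2 = T u 2 := by
      intro u
      have h1 : (Ut u)ᴴ * σz * Ut u =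
          (T u 0 * Real.cos (Λ 0) - T u 1 * Real.sin (Λ 0)) • σx
            + (T u 1 * Real.cos (Λ 0) + T u 0 * Real.sin (Λ 0)) • σy + (T u 2) • σz := by
        rw [hUt u, conj_sandwich, ← hT u, zconj]
        simp [Real.cos_neg, Real.sin_neg]
        ring_nf
      have h2 := (hTt u).trans h1
      obtain ⟨ha, hb, hc⟩ := pauli_inj _ _ _ _ _ _ h2
      exact ⟨by rw [ha]; ring, by rw [hb]; ring, hc⟩
    intro t
    rw [hrtdef, hrdef]
    have hT0 : Continuous fun u => T u 0 := (continuous_apply 0).comp hTcont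
    have hT1 : Continuous fun u => T u 1 := (continuous_apply 1).comp hTcont
    have hT2 : Continuous fun u => T u 2 := (continuous_apply 2).comp hTcont
    have i0 : (∫ u in (0:ℝ)..t, Tt u 0)
        = Real.cos (Λ 0) * (∫ u in (0:ℝ)..t, T u 0)
          - Real.sin (Λ 0) * ∫ u in (0:ℝ)..t, T u 1 := by
      rw [intervalIntegral.integral_congr
          (g := fun u => Real.cos (Λ 0) * T u 0 - Real.sin (Λ 0) * T u 1)
          (fun u _ => (hTteq u).1),
        intervalIntegral.integral_sub (f := fun u => Real.cos (Λ 0) * T u 0) (g := fun u => Real.sin (Λ 0) * T u 1) ((continuous_const.mul hT0).intervalIntegrable _ _)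
          ((continuous_const.mul hT1).intervalIntegrable _ _),
        intervalIntegral.integral_const_mul, intervalIntegral.integral_const_mul]
    have i1 : (∫ u in (0:ℝ)..t, Tt u 1)
        = Real.sin (Λ 0) * (∫ u in (0:ℝ)..t, T u 0)
          + Real.cos (Λ 0) * ∫ u in (0:ℝ)..t, T u 1 := by
      rw [intervalIntegral.integral_congr
          (g := fun u => Real.sin (Λ 0) * T u 0 + Real.cos (Λ 0) * T u 1)
          (fun u _ => (hTteq u).2.1),
        intervalIntegral.integral_add (f := fun u => Real.sin (Λ 0) * T u 0) (g := fun u => Real.cos (Λ 0) * T u 1) ((continuous_const.mul hT0).intervalIntegrable _ _)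
          ((continuous_const.mul hT1).intervalIntegrable _ _),
        intervalIntegral.integral_const_mul, intervalIntegral.integral_const_mul]
    have i2 : (∫ u in (0:ℝ)..t, Tt u 2) = ∫ u in (0:ℝ)..t, T u 2 :=
      intervalIntegral.integral_congr (fun u _ => (hTteq u).2.2)
    funext i
    fin_cases i <;>
      simp [intcomp _ Tt hTtcont, intcomp _ T hTcont, i0, i1, i2]
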